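/- Let G be the abelian subgroup of GL(2,ℝ) generated by the diagonal matrices A₁ = diag(−e^{√2/2}, 1), A₂ = diag(1, −e^{1/2}), A₃ = diag(e^{−√3/2}, e^{−√2/2}). Then G has a dense orbit in ℝ²; in fact the orbit of every point of ℝ* × ℝ* is dense in ℝ². -/

import Mathlib

open Real

lemma notsq (n : ℕ) (h : ¬ ∃ r ≤ n, r * r = n) : ¬ IsSquare n := by
  rintro ⟨r, hr⟩
  exact h ⟨r, by nlinarith, hr.symm⟩

lemma irr3 : Irrational (√3) := by
  have : ((3:ℕ):ℝ) = (3:ℝ) := by norm_num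
  rw [← this, irrational_sqrt_natCast_iff]
  apply notsq; decide
lemma irr6 : Irrational (√6) := by
  have : ((6:ℕ):ℝ) = (6:ℝ) := by norm_num
  rw [← this, irrational_sqrt_natCast_iff]
  apply notsq; decide

lemma int_eq_zero_of_mul_irr {x : ℝ} (hx : Irrational x) {n m : ℤ} (h : (n:ℝ) * x = m) : n = 0 := by
  by_contra hn
  exact (hx.intCast_mul hn).ne_int m h

lemma indep123 (p q r : ℤ) (h : (p:ℝ) * √3 + q * √2 + r = 0) : p = 0 ∧ q = 0 ∧ r = 0 := by
  have s22 : √2 * √2 = 2 := Real.mul_self_sqrt (by norm_num)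
  have s33 : √3 * √3 = 3 := Real.mul_self_sqrt (by norm_num)
  have s32 : √3 * √2 = √6 := by
    rw [← Real.sqrt_mul (by norm_num : (0:ℝ) ≤ 3)]; norm_num
  have h'' : ((p:ℝ)*√3) * ((p:ℝ)*√3) = ((q:ℝ)*√2 + r) * ((q:ℝ)*√2 + r) := by
    have h' : (p:ℝ) * √3 = -((q:ℝ)*√2 + r) := by linarith
    rw [h']; ring
  have hqr' : ((2*q*r:ℤ):ℝ) * √2 = ((3*p^2-2*q^2-r^2:ℤ):ℝ) := by
    push_cast
    linear_combination -h'' + (p:ℝ)^2 * s33 - (q:ℝ)^2 * s22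
  have hqr0 : q = 0 ∨ r = 0 := by
    have := int_eq_zero_of_mul_irr irrational_sqrt_two hqr'
    rcases mul_eq_zero.1 this with h' | h'
    · left; omega
    · right; exact h'
  rcases hqr0 with hq | hr
  · subst hq
    push_cast at h
    have hp : p = 0 := by
      refine int_eq_zero_of_mul_irr irr3 (m := -r) ?_
      push_cast; linarith
    subst hp
    push_cast at h
    refine ⟨rfl, rfl, by exact_mod_cast (by linarith : (r:ℝ) = 0)⟩
  · subst hr
    push_cast at h
    have h0 : (p:ℝ)*√3 + (q:ℝ)*√2 = 0 := by linarith
    have hmul : ((p:ℝ)*√3 + (q:ℝ)*√2) * √2 = 0 := by rw [h0]; ring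
    have hp : p = 0 := by
      refine int_eq_zero_of_mul_irr irr6 (m := -2*q) ?_
      push_cast
      linear_combination hmul - (p:ℝ)*s32 - (q:ℝ)*s22
    subst hp
    push_cast at h
    have hq : q = 0 := by
      refine int_eq_zero_of_mul_irr irrational_sqrt_two (m := 0) ?_
      push_cast; linarith
    exact ⟨rfl, hq, rfl⟩

def T : Set (ℝ × ℝ) := {p | ∃ a b c : ℤ, p = (2*a*√2 + c*√3, 2*b + c*√2)}

lemma T_sub {p q : ℝ × ℝ} (hp : p ∈ T) (hq : q ∈ T) : p - q ∈ T := by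
  obtain ⟨a, b, c, rfl⟩ := hp
  obtain ⟨a', b', c', rfl⟩ := hq
  exact ⟨a - a', b - b', c - c', by push_cast; apply Prod.ext <;> simp <;> ring⟩

lemma T_smul {p : ℝ × ℝ} (k : ℤ) (hp : p ∈ T) : (k:ℝ) • p ∈ T := by
  obtain ⟨a, b, c, rfl⟩ := hp
  exact ⟨k * a, k * b, k * c, by push_cast; apply Prod.ext <;> simp <;> ring⟩

lemma sqrt2_pos : (0:ℝ) < √2 := Real.sqrt_pos.2 (by norm_num)
lemma sqrt2_le : (√2:ℝ) ≤ 2 := by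
  nlinarith [Real.mul_self_sqrt (by norm_num : (0:ℝ) ≤ 2), sqrt2_pos]
lemma sqrt3_nonneg : (0:ℝ) ≤ √3 := Real.sqrt_nonneg 3
lemma sqrt3_le : (√3:ℝ) ≤ 2 := by
  nlinarith [Real.mul_self_sqrt (by norm_num : (0:ℝ) ≤ 3), sqrt3_nonneg]

noncomputable def FF (c : ℕ) : ℝ × ℝ :=
  (2*√2 * Int.fract (c*√3/(2*√2)), 2 * Int.fract (c*√2/2))

lemma fract_def (x : ℝ) : Int.fract x = x - ⌊x⌋ := rfl

lemma FF_mem (c : ℕ) : FF c ∈ T := by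
  refine ⟨-⌊(c:ℝ)*√3/(2*√2)⌋, -⌊(c:ℝ)*√2/2⌋, c, ?_⟩
  unfold FF
  have h2 : (2*√2 : ℝ) ≠ 0 := by positivity
  apply Prod.ext <;> simp only [fract_def] <;> push_cast
  · rw [mul_sub]
    have h : 2*√2 * ((c:ℝ)*√3/(2*√2)) = (c:ℝ)*√3 := by field_simp
    rw [h]; ring
  · rw [mul_sub]
    have h : 2 * ((c:ℝ)*√2/2) = (c:ℝ)*√2 := by field_simp
    rw [h]; ring

lemma FF_inj : Function.Injective FF := by
  intro c c' h
  have h2 : Int.fract ((c:ℝ)*√2/2) = Int.fract ((c':ℝ)*√2/2) := by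
    have := congrArg Prod.snd h
    simpa [FF] using this
  rw [Int.fract_eq_fract] at h2
  obtain ⟨z, hz⟩ := h2
  have : ((c:ℤ) - c' : ℝ) * √2 = ((2*z : ℤ):ℝ) := by push_cast; linarith [hz]
  have h0 : ((c:ℤ) - (c':ℤ)) = 0 := by
    exact_mod_cast int_eq_zero_of_mul_irr irrational_sqrt_two (by exact_mod_cast this)
  omega

lemma FF_bdd (c : ℕ) : FF c ∈ Metric.closedBall (0 : ℝ × ℝ) 9 := by
  rw [Metric.mem_closedBall, Prod.dist_eq]
  have f1 := Int.fract_nonneg ((c:ℝ)*√3/(2*√2))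
  have f2 := Int.fract_lt_one ((c:ℝ)*√3/(2*√2))
  have f3 := Int.fract_nonneg ((c:ℝ)*√2/2)
  have f4 := Int.fract_lt_one ((c:ℝ)*√2/2)
  have h2 := sqrt2_pos
  have h2' := sqrt2_le
  apply max_le <;> rw [Real.dist_eq] <;> unfold FF <;> simp <;> rw [abs_of_nonneg (by positivity)] <;> nlinarith [abs_of_nonneg f1, abs_of_nonneg f3]

lemma small_T : ∀ ε > 0, ∃ p ∈ T, p ≠ 0 ∧ ‖p‖ < ε := by
  intro ε hε
  obtain ⟨a, -, φ, hφ, hconv⟩ := tendsto_subseq_of_bounded Metric.isBounded_closedBall FF_bdd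
  rw [Metric.tendsto_atTop] at hconv
  obtain ⟨N, hN⟩ := hconv (ε/2) (by linarith)
  refine ⟨FF (φ (N+1)) - FF (φ N), T_sub (FF_mem _) (FF_mem _), ?_, ?_⟩
  · intro h
    have := FF_inj (sub_eq_zero.1 h)
    exact absurd (hφ.injective this) (by omega)
  · have d1 := hN (N+1) (by omega)
    have d2 := hN N (le_refl N)
    calc ‖FF (φ (N+1)) - FF (φ N)‖ = dist (FF (φ (N+1))) (FF (φ N)) := (dist_eq_norm _ _).symm
      _ ≤ dist (FF (φ (N+1))) a + dist a (FF (φ N)) := dist_triangle _ _ _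
      _ < ε := by rw [dist_comm a]; simp only [Function.comp] at d1 d2; linarith

lemma line_T : ∃ u : ℝ × ℝ, u ≠ 0 ∧ ∀ t : ℝ, t • u ∈ closure T := by
  have hch : ∀ n : ℕ, ∃ p ∈ T, p ≠ 0 ∧ ‖p‖ < 1/(n+1) := fun n =>
    small_T (1/(n+1)) (by positivity)
  choose h hT hne hsm using hch
  set u' : ℕ → ℝ × ℝ := fun n => ‖h n‖⁻¹ • h n with hu'
  have hnorm : ∀ n, ‖u' n‖ = 1 := by
    intro n
    rw [hu', norm_smul, norm_inv, norm_norm, inv_mul_cancel₀ (norm_ne_zero_iff.2 (hne n))]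
  have hbdd : ∀ n, u' n ∈ Metric.closedBall (0 : ℝ × ℝ) 1 := by
    intro n; rw [Metric.mem_closedBall, dist_zero_right, hnorm]
  obtain ⟨u, -, φ, hφ, hconv⟩ := tendsto_subseq_of_bounded Metric.isBounded_closedBall hbdd
  have hu1 : ‖u‖ = 1 := by
    have := Filter.Tendsto.comp (continuous_norm.tendsto u) hconv
    have h2 : Filter.Tendsto (fun n => ‖u' (φ n)‖) Filter.atTop (nhds 1) := by
      simp only [hnorm]; exact tendsto_const_nhds
    exact tendsto_nhds_unique this h2
  refine ⟨u, by intro h0; rw [h0, norm_zero] at hu1; norm_num at hu1, ?_⟩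
  intro t
  set k : ℕ → ℤ := fun n => round (t / ‖h (φ n)‖) with hk
  have hmem : ∀ n, ((k n : ℝ)) • h (φ n) ∈ T := fun n => T_smul _ (hT _)
  have htend : Filter.Tendsto (fun n => ((k n : ℝ)) • h (φ n)) Filter.atTop (nhds (t • u)) := by
    have heq : ∀ n, ((k n : ℝ)) • h (φ n) = (((k n : ℝ)) * ‖h (φ n)‖) • u' (φ n) := by
      intro n
      rw [hu', smul_smul, mul_assoc, mul_inv_cancel₀ (norm_ne_zero_iff.2 (hne _)), mul_one]
    simp only [heq]
    have hsc : Filter.Tendsto (fun n => ((k n : ℝ)) * ‖h (φ n)‖) Filter.atTop (nhds t) := by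
      rw [Metric.tendsto_atTop]
      intro ε hε
      obtain ⟨N, hN⟩ := exists_nat_gt (1/ε)
      refine ⟨N, fun n hn => ?_⟩
      have hpos : 0 < ‖h (φ n)‖ := norm_pos_iff.2 (hne _)
      have hr := abs_sub_round (t / ‖h (φ n)‖)
      have key : |(k n : ℝ) * ‖h (φ n)‖ - t| ≤ ‖h (φ n)‖ := by
        have : (k n : ℝ) * ‖h (φ n)‖ - t = ((k n : ℝ) - t / ‖h (φ n)‖) * ‖h (φ n)‖ := by
          field_simp
        rw [this, abs_mul, abs_of_pos hpos]
        calc |(k n : ℝ) - t / ‖h (φ n)‖| * ‖h (φ n)‖ ≤ (1/2) * ‖h (φ n)‖ := by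
              apply mul_le_mul_of_nonneg_right _ hpos.le
              rw [abs_sub_comm]; exact hr
          _ ≤ ‖h (φ n)‖ := by linarith
      rw [Real.dist_eq]
      have h1 : ‖h (φ n)‖ < 1/(φ n + 1) := hsm _
      have h3 : (n:ℝ) ≤ φ n := by exact_mod_cast (hφ.le_apply)
      have h4 : (1:ℝ)/(φ n + 1) ≤ 1/(n+1) := by
        apply one_div_le_one_div_of_le (by positivity)
        linarith
      have h5 : (1:ℝ)/(n+1) < ε := by
        rw [div_lt_iff₀ (by positivity)]
        have : (N:ℝ) < n + 1 := by
          have : (N:ℝ) ≤ n := by exact_mod_cast hn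
          linarith
        calc (1:ℝ) = ε * (1/ε) := by field_simp
          _ < ε * N := by apply mul_lt_mul_of_pos_left hN hε
          _ ≤ ε * (n+1) := by apply mul_le_mul_of_nonneg_left (by linarith) hε.le
      calc |(k n : ℝ) * ‖h (φ n)‖ - t| ≤ ‖h (φ n)‖ := key
        _ < ε := by linarith
    exact hsc.smul hconv
  exact mem_closure_of_tendsto htend (Filter.Eventually.of_forall fun n => hmem n)

lemma T_zero : (0 : ℝ × ℝ) ∈ T := ⟨0, 0, 0, by norm_num; rfl⟩

lemma T_add {p q : ℝ × ℝ} (hp : p ∈ T) (hq : q ∈ T) : p + q ∈ T := by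
  obtain ⟨a, b, c, rfl⟩ := hp
  obtain ⟨a', b', c', rfl⟩ := hq
  exact ⟨a + a', b + b', c + c', by push_cast; apply Prod.ext <;> simp <;> ring⟩

lemma T_neg {p : ℝ × ℝ} (hp : p ∈ T) : -p ∈ T := by
  obtain ⟨a, b, c, rfl⟩ := hp
  exact ⟨-a, -b, -c, by push_cast; apply Prod.ext <;> simp <;> ring⟩

lemma T_closure_add {x y : ℝ × ℝ} (hx : x ∈ T) (hy : y ∈ closure T) : x + y ∈ closure T := by
  have hcont : Continuous (fun z : ℝ × ℝ => x + z) := continuous_const.add continuous_id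
  have h1 : x + y ∈ (fun z : ℝ × ℝ => x + z) '' closure T := ⟨y, hy, rfl⟩
  have h2 : (fun z : ℝ × ℝ => x + z) '' closure T ⊆ closure ((fun z : ℝ × ℝ => x + z) '' T) :=
    image_closure_subset_closure_image hcont
  refine closure_mono ?_ (h2 h1)
  rintro w ⟨p, hp, rfl⟩
  exact T_add hx hp

lemma dense_T : Dense T := by
  obtain ⟨u, hu0, hline⟩ := line_T
  intro z
  rw [← closure_closure]
  rw [Metric.mem_closure_iff]
  intro ε hε
  set lam := -u.2 with hlam
  set mu := u.1 with hmu
  set X := lam * (2*√2) with hX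
  set Y := mu * 2 with hY
  set Z := lam * √3 + mu * √2 with hZ
  have s22 : √2 * √2 = 2 := Real.mul_self_sqrt (by norm_num)
  have h22 : (2*√2 : ℝ) ≠ 0 := by positivity
  set F := AddSubgroup.closure ({X, Y, Z} : Set ℝ) with hF
  rcases AddSubgroup.dense_or_cyclic F with hd | ⟨α, hα⟩
  · -- dense case
    set q := u.1^2 + u.2^2 with hq'
    have hq : 0 < q := by
      rcases eq_or_ne u.1 0 with h1 | h1
      · have h2 : u.2 ≠ 0 := fun h2 => hu0 (Prod.ext (by simpa using h1) (by simpa using h2))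
        positivity
      · positivity
    set C := (|u.1| + |u.2|)/q + 1 with hC
    have hCpos : 0 < C := by positivity
    have hmemF : (lam * z.1 + mu * z.2) ∈ closure (F : Set ℝ) := hd _
    rw [Metric.mem_closure_iff] at hmemF
    obtain ⟨w, hwF, hw⟩ := hmemF (ε/(2*C)) (by positivity)
    -- w = f p for some p ∈ T
    have hrep : ∃ p ∈ T, lam * p.1 + mu * p.2 = w := by
      set F' : AddSubgroup ℝ :=
        { carrier := {r | ∃ p ∈ T, lam * p.1 + mu * p.2 = r}
          zero_mem' := ⟨0, T_zero, by norm_num⟩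
          add_mem' := by
            rintro r s ⟨p, hp, rfl⟩ ⟨p', hp', rfl⟩
            exact ⟨p + p', T_add hp hp', by simp [Prod.fst_add, Prod.snd_add]; ring⟩
          neg_mem' := by
            rintro r ⟨p, hp, rfl⟩
            exact ⟨-p, T_neg hp, by simp; ring⟩ }
      have hle : F ≤ F' := by
        rw [hF]
        apply AddSubgroup.closure_le F' |>.2
        rintro x (rfl | rfl | rfl)
        · exact ⟨(2*√2, 0), ⟨1, 0, 0, by norm_num⟩, by simp [hX]⟩
        · exact ⟨(0, 2), ⟨0, 1, 0, by norm_num⟩, by simp [hY]⟩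
        · exact ⟨(√3, √2), ⟨0, 0, 1, by norm_num⟩, by simp [hZ]⟩
      exact hle hwF
    obtain ⟨p, hpT, hfp⟩ := hrep
    set s := (u.1*(z.1-p.1) + u.2*(z.2-p.2))/q with hs
    refine ⟨p + s • u, T_closure_add hpT (hline s), ?_⟩
    set r := lam*(z.1-p.1) + mu*(z.2-p.2) with hr
    have hrw : |r| < ε/(2*C) := by
      have : r = lam * z.1 + mu * z.2 - w := by rw [hr, ← hfp]; ring
      rw [this, ← Real.dist_eq]
      exact hw
    have hid1 : z.1 - (p + s • u).1 = (r/q) * (-u.2) := by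
      simp only [Prod.fst_add, Prod.smul_fst, smul_eq_mul, hs, hr, hlam, hmu, hq']
      have hq0 : u.1^2+u.2^2 ≠ 0 := hq.ne'
      field_simp
      ring
    have hid2 : z.2 - (p + s • u).2 = (r/q) * u.1 := by
      simp only [Prod.snd_add, Prod.smul_snd, smul_eq_mul, hs, hr, hlam, hmu, hq']
      have hq0 : u.1^2+u.2^2 ≠ 0 := hq.ne'
      field_simp
      ring
    have key : ∀ (d : ℝ), |d| ≤ |u.1| + |u.2| → |r/q * d| < ε/2 := by
      intro d hd
      have h1 : |r/q * d| = |r| * (|d| / q) := by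
        rw [abs_mul, abs_div, abs_of_pos hq]; ring
      have h2 : |d| / q ≤ C := by
        have h2' : |d|/q ≤ (|u.1| + |u.2|)/q := (div_le_div_iff_of_pos_right hq).2 hd
        linarith
      have h3 : |r| * (|d|/q) ≤ |r| * C := mul_le_mul_of_nonneg_left h2 (abs_nonneg r)
      have h4 : |r| * C < (ε/(2*C)) * C := mul_lt_mul_of_pos_right hrw hCpos
      have h5 : (ε/(2*C)) * C = ε/2 := by field_simp
      rw [h1]; linarith
    rw [Prod.dist_eq]
    apply max_lt
    · rw [Real.dist_eq, hid1]
      have := key (-u.2) (by rw [abs_neg]; linarith [abs_nonneg u.1])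
      linarith
    · rw [Real.dist_eq, hid2]
      have := key u.1 (by linarith [abs_nonneg u.2])
      linarith
  · exfalso
    have hXF : X ∈ F := AddSubgroup.subset_closure (by simp)
    have hYF : Y ∈ F := AddSubgroup.subset_closure (by simp)
    have hZF : Z ∈ F := AddSubgroup.subset_closure (by simp)
    rw [hα, AddSubgroup.mem_closure_singleton] at hXF hYF hZF
    obtain ⟨n₁, hn₁⟩ := hXF
    obtain ⟨n₂, hn₂⟩ := hYF
    obtain ⟨n₃, hn₃⟩ := hZF
    rw [zsmul_eq_mul, hX] at hn₁
    rw [zsmul_eq_mul, hY] at hn₂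
    rw [zsmul_eq_mul, hZ] at hn₃
    have key : ((2*(n₁:ℝ))*√3 + (-(4*(n₃:ℝ)))*√2 + (4*(n₂:ℝ))) * α = 0 := by
      linear_combination (2*√3)*hn₁ + 4*hn₂ - (4*√2)*hn₃ - (4*mu)*s22
    have hLM : lam * (2*√2) = 0 ∧ mu * 2 = 0 := by
      rcases mul_eq_zero.1 key with hrel | hα0
      · obtain ⟨e1, e2, e3⟩ := indep123 (2*n₁) (-(4*n₃)) (4*n₂) (by push_cast; linarith [hrel])
        have hn₁0 : n₁ = 0 := by omega
        have hn₂0 : n₂ = 0 := by omega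
        rw [hn₁0] at hn₁
        rw [hn₂0] at hn₂
        push_cast at hn₁ hn₂
        exact ⟨by linarith, by linarith⟩
      · rw [hα0, mul_zero] at hn₁ hn₂
        exact ⟨hn₁.symm, hn₂.symm⟩
    have hlam0 : lam = 0 := by
      rcases mul_eq_zero.1 hLM.1 with h | h
      · exact h
      · exact absurd h h22
    have hmu0 : mu = 0 := by
      have := hLM.2
      linarith
    exact hu0 (Prod.ext (by simpa [hmu] using hmu0)
      (by simpa using (neg_eq_zero.1 (hlam ▸ hlam0 : -u.2 = 0))))


lemma exp_zpow (x : ℝ) (n : ℤ) : exp (n * x) = exp x ^ n := by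
  rcases n with n | n
  · rw [Int.ofNat_eq_coe, zpow_natCast, ← exp_nat_mul]; norm_num
  · rw [zpow_negSucc, ← exp_nat_mul, ← Real.exp_neg]; push_cast; ring_nf

noncomputable def du (x y : ℝˣ) : Matrix.GeneralLinearGroup (Fin 2) ℝ :=
  ⟨!![(x:ℝ), 0; 0, (y:ℝ)], !![((x⁻¹:ℝˣ):ℝ), 0; 0, ((y⁻¹:ℝˣ):ℝ)],
   by rw [Matrix.mul_fin_two]; simp [Matrix.one_fin_two],
   by rw [Matrix.mul_fin_two]; simp [Matrix.one_fin_two]⟩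

lemma du_val (x y : ℝˣ) : ((du x y : Matrix.GeneralLinearGroup (Fin 2) ℝ) : Matrix (Fin 2) (Fin 2) ℝ) = !![(x:ℝ), 0; 0, (y:ℝ)] := rfl

lemma du_mul (x y x' y' : ℝˣ) : du x y * du x' y' = du (x*x') (y*y') := by
  apply Units.ext
  rw [Units.val_mul, du_val, du_val, du_val, Matrix.mul_fin_two]
  simp

noncomputable def Phi : ℝˣ × ℝˣ →* Matrix.GeneralLinearGroup (Fin 2) ℝ :=
  MonoidHom.mk' (fun p => du p.1 p.2) (fun a b => by simp only [Prod.fst_mul, Prod.snd_mul, du_mul])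

lemma du_zpow (x y : ℝˣ) (n : ℤ) : (du x y)^n = du (x^n) (y^n) := by
  have := map_zpow Phi (x, y) n
  simpa [Phi, Prod.pow_def] using this.symm

lemma mulVec_diag (p q : ℝ) (v : Fin 2 → ℝ) :
    (!![p, 0; 0, q]).mulVec v = ![p * v 0, q * v 1] := by
  funext i
  fin_cases i <;> simp [Matrix.mulVec, dotProduct, Fin.sum_univ_two]

section orbit
variable (g₁ g₂ g₃ : Matrix.GeneralLinearGroup (Fin 2) ℝ)
    (h₁ : (g₁ : Matrix (Fin 2) (Fin 2) ℝ) =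
      !![-(Real.exp (Real.sqrt 2 / 2)), 0; 0, 1])
    (h₂ : (g₂ : Matrix (Fin 2) (Fin 2) ℝ) =
      !![1, 0; 0, -(Real.exp (1 / 2))])
    (h₃ : (g₃ : Matrix (Fin 2) (Fin 2) ℝ) =
      !![Real.exp (-(Real.sqrt 3 / 2)), 0; 0, Real.exp (-(Real.sqrt 2 / 2))])

noncomputable def u1 : ℝˣ := Units.mk0 (-(exp (√2/2))) (neg_ne_zero.2 (exp_ne_zero _))
noncomputable def u2 : ℝˣ := Units.mk0 (-(exp (1/2))) (neg_ne_zero.2 (exp_ne_zero _))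
noncomputable def e1 : ℝˣ := Units.mk0 (exp (-(√3/2))) (exp_ne_zero _)
noncomputable def e2 : ℝˣ := Units.mk0 (exp (-(√2/2))) (exp_ne_zero _)

include h₁ h₂ h₃ in
lemma orbit_elem (v : Fin 2 → ℝ) (a b c : ℤ) :
    ∃ A ∈ Subgroup.closure {g₁, g₂, g₃},
      (A : Matrix (Fin 2) (Fin 2) ℝ).mulVec v =
        ![v 0 * ((-1:ℝ)^a * exp ((a*√2 - c*√3)/2)), v 1 * ((-1:ℝ)^b * exp ((b - c*√2)/2))] := by
  have hg1 : g₁ = du u1 1 := Units.ext (by rw [h₁, du_val]; simp [u1])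
  have hg2 : g₂ = du 1 u2 := Units.ext (by rw [h₂, du_val]; simp [u2])
  have hg3 : g₃ = du e1 e2 := Units.ext (by rw [h₃, du_val]; simp [e1, e2])
  refine ⟨g₁^a * g₂^b * g₃^c, ?_, ?_⟩
  · exact mul_mem (mul_mem (zpow_mem (Subgroup.subset_closure (by simp)) a)
      (zpow_mem (Subgroup.subset_closure (by simp)) b))
      (zpow_mem (Subgroup.subset_closure (by simp)) c)
  · rw [hg1, hg2, hg3, du_zpow, du_zpow, du_zpow, du_mul, du_mul]
    rw [du_val, mulVec_diag]
    have hv1 : ((u1^a * 1^b * e1^c : ℝˣ) : ℝ) = (-1:ℝ)^a * exp ((a*√2 - c*√3)/2) := by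
      simp only [one_zpow, mul_one, Units.val_mul, Units.val_zpow_eq_zpow_val, u1, e1,
        Units.val_mk0]
      rw [neg_eq_neg_one_mul, mul_zpow, ← exp_zpow, ← exp_zpow, mul_assoc, ← Real.exp_add]
      congr 1
      ring
    have hv2 : ((1^a * u2^b * e2^c : ℝˣ) : ℝ) = (-1:ℝ)^b * exp ((b - c*√2)/2) := by
      simp only [one_zpow, one_mul, Units.val_mul, Units.val_zpow_eq_zpow_val, u2, e2,
        Units.val_mk0]
      rw [neg_eq_neg_one_mul, mul_zpow, ← exp_zpow, ← exp_zpow, mul_assoc, ← Real.exp_add]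
      congr 1
      ring
    rw [hv1, hv2]
    funext i
    fin_cases i <;> simp <;> ring

include h₁ h₂ h₃ in
lemma orbit_dense (v : Fin 2 → ℝ) (hv0 : v 0 ≠ 0) (hv1 : v 1 ≠ 0) :
    Dense {x : Fin 2 → ℝ | ∃ A ∈ Subgroup.closure {g₁, g₂, g₃},
      x = (A : Matrix (Fin 2) (Fin 2) ℝ).mulVec v} := by
  set S := {x : Fin 2 → ℝ | ∃ A ∈ Subgroup.closure {g₁, g₂, g₃},
      x = (A : Matrix (Fin 2) (Fin 2) ℝ).mulVec v} with hS
  have sign_div_pos : ∀ w y : ℝ, w ≠ 0 → y ≠ 0 →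
      0 < y / (w * (-1:ℝ)^(if 0 < w * y then (0:ℤ) else 1)) := by
    intro w y hw hy
    by_cases h : 0 < w * y
    · simp only [h, if_true, zpow_zero, mul_one]
      rw [div_pos_iff]
      rcases mul_pos_iff.1 h with ⟨ha, hb⟩ | ⟨ha, hb⟩
      · exact Or.inl ⟨hb, ha⟩
      · exact Or.inr ⟨hb, ha⟩
    · have h' : w * y < 0 := lt_of_le_of_ne (not_lt.1 h) (mul_ne_zero hw hy)
      simp only [h, if_false, zpow_one, mul_neg, mul_one]
      rw [div_pos_iff]
      rcases mul_neg_iff.1 h' with ⟨ha, hb⟩ | ⟨ha, hb⟩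
      · exact Or.inr ⟨hb, by linarith⟩
      · exact Or.inl ⟨hb, by linarith⟩
  have stepA : ∀ y : Fin 2 → ℝ, y 0 ≠ 0 → y 1 ≠ 0 → y ∈ closure S := by
    intro y hy0 hy1
    set ε₁ : ℤ := if 0 < v 0 * y 0 then 0 else 1 with hε₁
    set ε₂ : ℤ := if 0 < v 1 * y 1 then 0 else 1 with hε₂
    set E1 : ℝ := (-1:ℝ)^ε₁ with hE1
    set E2 : ℝ := (-1:ℝ)^ε₂ with hE2
    have hpos1 : 0 < y 0 / (v 0 * E1) := sign_div_pos (v 0) (y 0) hv0 hy0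
    have hpos2 : 0 < y 1 / (v 1 * E2) := sign_div_pos (v 1) (y 1) hv1 hy1
    have hE1ne : E1 ≠ 0 := by
      rw [hE1]; exact zpow_ne_zero _ (by norm_num)
    have hE2ne : E2 ≠ 0 := by
      rw [hE2]; exact zpow_ne_zero _ (by norm_num)
    set t₁ : ℝ := 2*Real.log (y 0 / (v 0 * E1)) - ε₁*√2 with ht₁
    set t₂ : ℝ := 2*Real.log (y 1 / (v 1 * E2)) - ε₂ with ht₂
    set G : ℝ × ℝ → (Fin 2 → ℝ) :=
      fun p => ![v 0 * E1 * exp ((ε₁*√2 + p.1)/2), v 1 * E2 * exp ((ε₂ + p.2)/2)] with hG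
    have hGc : Continuous G := by
      apply continuous_pi
      intro i
      fin_cases i <;> simp [hG] <;> fun_prop
    have himg : ∀ p ∈ T, G p ∈ S := by
      rintro p ⟨a, b, c, rfl⟩
      obtain ⟨A, hA, hAv⟩ := orbit_elem g₁ g₂ g₃ h₁ h₂ h₃ v (ε₁ + 2*a) (ε₂ + 2*b) (-c)
      refine ⟨A, hA, ?_⟩
      rw [hAv]
      have hz1 : (-1:ℝ)^(ε₁ + 2*a) = E1 := by
        rw [zpow_add₀ (by norm_num : (-1:ℝ) ≠ 0), zpow_mul]
        norm_num [hE1]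
      have hz2 : (-1:ℝ)^(ε₂ + 2*b) = E2 := by
        rw [zpow_add₀ (by norm_num : (-1:ℝ) ≠ 0), zpow_mul]
        norm_num [hE2]
      funext i
      fin_cases i <;> simp [hG, hz1, hz2] <;> rw [mul_assoc] <;> congr 3 <;> push_cast <;> ring
    have hy' : y = G (t₁, t₂) := by
      funext i
      fin_cases i <;> simp [hG]
      · rw [show (ε₁*√2 + t₁)/2 = Real.log (y 0/(v 0*E1)) by rw [ht₁]; ring]
        rw [Real.exp_log hpos1]
        field_simp
      · rw [show ((ε₂:ℝ) + t₂)/2 = Real.log (y 1/(v 1*E2)) by rw [ht₂]; ring]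
        rw [Real.exp_log hpos2]
        field_simp
    rw [hy']
    have hmem : G (t₁, t₂) ∈ G '' (closure T) :=
      ⟨(t₁, t₂), by rw [dense_iff_closure_eq.1 dense_T]; trivial, rfl⟩
    have h2 := image_closure_subset_closure_image hGc hmem
    exact closure_mono (by rintro w ⟨p, hp, rfl⟩; exact himg p hp) h2
  intro x
  set yseq : ℕ → Fin 2 → ℝ := fun n i => x i + (1/(n+1:ℝ)) * (if x i = 0 then 1 else 0)
    with hyseq
  have hyne : ∀ (n : ℕ) (i : Fin 2), yseq n i ≠ 0 := by
    intro n i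
    by_cases h : x i = 0 <;> simp [hyseq, h]
    positivity
  have htend : Filter.Tendsto yseq Filter.atTop (nhds x) := by
    rw [tendsto_pi_nhds]
    intro i
    by_cases h : x i = 0
    · simp only [hyseq, if_pos h, h, mul_one, zero_add]
      simpa using tendsto_one_div_add_atTop_nhds_zero_nat (𝕜 := ℝ)
    · simp [hyseq, h]
  exact isClosed_closure.mem_of_tendsto htend
    (Filter.Eventually.of_forall fun n => stepA (yseq n) (hyne n 0) (hyne n 1))
end orbit

/-- Example 9.2: the abelian subgroup of `GL(2, ℝ)` generated by
`A₁ = diag(-e^{√2/2}, 1)`, `A₂ = diag(1, -e^{1/2})`, `A₃ = diag(e^{-√3/2}, e^{-√2/2})`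
has a dense orbit in `ℝ²`; in fact every orbit of a point of `ℝ* × ℝ*` is dense. -/
theorem example_diag_dense_orbits
    (g₁ g₂ g₃ : Matrix.GeneralLinearGroup (Fin 2) ℝ)
    (h₁ : (g₁ : Matrix (Fin 2) (Fin 2) ℝ) =
      !![-(Real.exp (Real.sqrt 2 / 2)), 0; 0, 1])
    (h₂ : (g₂ : Matrix (Fin 2) (Fin 2) ℝ) =
      !![1, 0; 0, -(Real.exp (1 / 2))])
    (h₃ : (g₃ : Matrix (Fin 2) (Fin 2) ℝ) =
      !![Real.exp (-(Real.sqrt 3 / 2)), 0; 0, Real.exp (-(Real.sqrt 2 / 2))]) :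
    (∃ v : Fin 2 → ℝ,
      Dense {x : Fin 2 → ℝ | ∃ A ∈ Subgroup.closure {g₁, g₂, g₃},
        x = (A : Matrix (Fin 2) (Fin 2) ℝ).mulVec v}) ∧
    ∀ v : Fin 2 → ℝ, v 0 ≠ 0 → v 1 ≠ 0 →
      Dense {x : Fin 2 → ℝ | ∃ A ∈ Subgroup.closure {g₁, g₂, g₃},
        x = (A : Matrix (Fin 2) (Fin 2) ℝ).mulVec v} := by
  refine ⟨⟨![1, 1], ?_⟩, fun v hv0 hv1 => orbit_dense g₁ g₂ g₃ h₁ h₂ h₃ v hv0 hv1⟩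
  exact orbit_dense g₁ g₂ g₃ h₁ h₂ h₃ ![1, 1] (by norm_num) (by norm_num)
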